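/- Let R be a commutative ring and S a set. Let B(S) be the set of finite subsets of S, which is a commutative idempotent monoid under union with unit ∅. Then the R-algebra R{S} := R[X_s : s ∈ S]/(X_s² − X_s : s ∈ S) is isomorphic to the monoid algebra R[B(S)]. -/

import Mathlib

/-- The commutative monoid of finite subsets of `S` under union, with unit `∅`. -/
instance finsetUnionCommMonoid (S : Type*) [DecidableEq S] : CommMonoid (Finset S) where
  mul := (· ∪ ·)
  one := ∅
  mul_assoc := Finset.union_assoc
  one_mul := Finset.empty_union
  mul_one := Finset.union_empty
  mul_comm := Finset.union_comm

/-- `R{S} = R[X_s : s ∈ S] / (X_s² - X_s)`. -/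
abbrev RBrace (R S : Type*) [CommRing R] : Type _ :=
  MvPolynomial S R ⧸
    (Ideal.span (Set.range fun s : S =>
      (MvPolynomial.X s * MvPolynomial.X s - MvPolynomial.X s : MvPolynomial S R)))

open MvPolynomial

lemma prod_union_of_idem {M S : Type*} [CommMonoid M] [DecidableEq S]
    (x : S → M) (hx : ∀ s, x s * x s = x s) (K L : Finset S) :
    ∏ s ∈ K ∪ L, x s = (∏ s ∈ K, x s) * ∏ s ∈ L, x s := by
  have key : (∏ s ∈ K ∪ L, x s) * ∏ s ∈ K ∩ L, x s = ∏ s ∈ K ∪ L, x s := by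
    rw [← Finset.prod_sdiff (Finset.inter_subset_union), mul_assoc,
      ← Finset.prod_mul_distrib]
    simp [hx]
  rw [← Finset.prod_union_inter, key]

lemma prod_singletons {S : Type*} [DecidableEq S] (K : Finset S) :
    ∏ s ∈ K, ({s} : Finset S) = K := by
  classical
  induction K using Finset.induction_on with
  | empty => rfl
  | insert a s ha ih =>
    rw [Finset.prod_insert ha]
    show _ ∪ _ = _
    rw [ih]
    exact (Finset.insert_eq _ _).symm

theorem stmt8 (R S : Type*) [CommRing R] [DecidableEq S] :
    ∃ e : RBrace R S ≃ₐ[R] MonoidAlgebra R (Finset S),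
      ∀ s : S, e (Ideal.Quotient.mk _ (MvPolynomial.X s))
        = MonoidAlgebra.single ({s} : Finset S) 1 := by
  classical
  set I : Ideal (MvPolynomial S R) := Ideal.span (Set.range fun s : S =>
      (MvPolynomial.X s * MvPolynomial.X s - MvPolynomial.X s : MvPolynomial S R)) with hI
  let fwd0 : MvPolynomial S R →ₐ[R] MonoidAlgebra R (Finset S) :=
    aeval (fun s => MonoidAlgebra.single ({s} : Finset S) (1 : R))
  have hgen : ∀ a ∈ I, fwd0 a = 0 := by
    have hle : I ≤ RingHom.ker fwd0.toRingHom := by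
      rw [hI, Ideal.span_le]
      rintro _ ⟨s, rfl⟩
      simp only [RingHom.mem_ker, SetLike.mem_coe, map_sub, map_mul, AlgHom.coe_toRingHom,
        AlgHom.toRingHom_eq_coe, RingHom.coe_coe, fwd0, aeval_X]
      rw [MonoidAlgebra.single_mul_single]
      show MonoidAlgebra.single ({s} ∪ {s} : Finset S) (1 * 1 : R) - _ = 0
      simp
    exact fun a ha => hle ha
  let fwd : RBrace R S →ₐ[R] MonoidAlgebra R (Finset S) :=
    Ideal.Quotient.liftₐ I fwd0 hgen
  have hidem : ∀ s : S, (Ideal.Quotient.mk I (X s)) * (Ideal.Quotient.mk I (X s))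
      = Ideal.Quotient.mk I (X s) := by
    intro s
    rw [← map_mul, Ideal.Quotient.eq]
    exact Ideal.subset_span ⟨s, rfl⟩
  let f : Finset S →* RBrace R S :=
  { toFun := fun K => Ideal.Quotient.mk I (∏ s ∈ K, X s)
    map_one' := by
      show Ideal.Quotient.mk I (∏ s ∈ (∅ : Finset S), X s) = 1
      simp
    map_mul' := by
      intro K L
      show Ideal.Quotient.mk I (∏ s ∈ K ∪ L, X s)
        = Ideal.Quotient.mk I (∏ s ∈ K, X s) * Ideal.Quotient.mk I (∏ s ∈ L, X s)
      rw [map_prod, map_prod, map_prod,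
        prod_union_of_idem (fun s => Ideal.Quotient.mk I (X s)) hidem K L] }
  let bwd : MonoidAlgebra R (Finset S) →ₐ[R] RBrace R S :=
    MonoidAlgebra.lift R (RBrace R S) (Finset S) f
  have hfwd_single : ∀ K : Finset S,
      fwd (Ideal.Quotient.mk I (∏ s ∈ K, X s)) = MonoidAlgebra.single K 1 := by
    intro K
    have : fwd (Ideal.Quotient.mk I (∏ s ∈ K, X s)) = fwd0 (∏ s ∈ K, X s) := rfl
    rw [this, map_prod]
    simp only [fwd0, aeval_X]
    have : ∀ s : S, MonoidAlgebra.single ({s} : Finset S) (1 : R)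
        = MonoidAlgebra.of R (Finset S) {s} := fun s => rfl
    simp_rw [this, ← map_prod, prod_singletons]
    rfl
  have h1 : fwd.comp bwd = AlgHom.id R (MonoidAlgebra R (Finset S)) := by
    refine MonoidAlgebra.algHom_ext ?_ (Subsingleton.elim _ _)
    intro K
    simp only [AlgHom.coe_comp, Function.comp_apply, AlgHom.id_apply]
    rw [show bwd (MonoidAlgebra.single K 1) = f K by
      simp [bwd, MonoidAlgebra.lift_single]]
    exact hfwd_single K
  have h2 : bwd.comp fwd = AlgHom.id R (RBrace R S) := by
    apply Ideal.Quotient.algHom_ext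
    apply MvPolynomial.algHom_ext
    intro s
    simp only [AlgHom.coe_comp, Function.comp_apply, Ideal.Quotient.mkₐ_eq_mk,
      AlgHom.id_apply]
    have : fwd (Ideal.Quotient.mk I (X s)) = MonoidAlgebra.single ({s} : Finset S) 1 := by
      show fwd0 (X s) = _
      simp [fwd0]
    rw [this, show bwd (MonoidAlgebra.single ({s} : Finset S) 1) = f {s} by
      simp [bwd, MonoidAlgebra.lift_single]]
    show Ideal.Quotient.mk I (∏ t ∈ ({s} : Finset S), X t) = _
    simp
    rfl
  refine ⟨AlgEquiv.ofAlgHom fwd bwd h1 h2, fun s => ?_⟩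
  show fwd0 (X s) = _
  simp [fwd0]
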